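/- Over the field ℝ of real numbers, the 4×4 strictly lower triangular matrices S_1 with rows (0,0,0,0), (0,0,0,0), (1,1,0,0), (1,1,0,0) and S_{−1} with rows (0,0,0,0), (0,0,0,0), (1,1,0,0), (−1,1,0,0) give non-isomorphic graded algebras: A(S_1) ≇ A(S_{−1}). -/

import Mathlib

open MvPolynomial

noncomputable section

variable (F : Type) [Field F]

/-- The defining relations of the nil graded algebra `A(T)`. -/
def relSet {n : ℕ} (T : Matrix (Fin n) (Fin n) F) : Set (MvPolynomial (Fin n) F) :=
  { p | ∃ i : Fin n,
      p = X i ^ 2 - ∑ j ∈ Finset.univ.filter (fun j => j < i), C (T i j) * X j * X i }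

/-- The nil graded algebra `A(T)` associated to a strictly lower triangular matrix `T`. -/
abbrev NTAlg {n : ℕ} (T : Matrix (Fin n) (Fin n) F) : Type :=
  MvPolynomial (Fin n) F ⧸ Ideal.span (relSet F T)

/-- The generators `X i` of `A(T)`. -/
def NTgen {n : ℕ} (T : Matrix (Fin n) (Fin n) F) (i : Fin n) : NTAlg F T :=
  Ideal.Quotient.mk _ (X i)

/-- An algebra isomorphism is degree preserving iff it (and its inverse) maps the span
of the degree-2 generators into the span of the degree-2 generators. -/
def IsGradedIso {n : ℕ} {T S : Matrix (Fin n) (Fin n) F}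
    (e : NTAlg F T ≃ₐ[F] NTAlg F S) : Prop :=
  (∀ j, e (NTgen F T j) ∈ Submodule.span F (Set.range (NTgen F S))) ∧
  (∀ j, e.symm (NTgen F S j) ∈ Submodule.span F (Set.range (NTgen F T)))

/-- `A(T)` and `A(S)` are isomorphic in the category 𝒩𝒯. -/
def NTIso {n : ℕ} (T S : Matrix (Fin n) (Fin n) F) : Prop :=
  ∃ e : NTAlg F T ≃ₐ[F] NTAlg F S, IsGradedIso F e

/-- A matrix is strictly lower triangular. -/
def SLTM {n : ℕ} (T : Matrix (Fin n) (Fin n) F) : Prop :=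
  ∀ i j : Fin n, i ≤ j → T i j = 0

/-- The key system of equations (Theorem `theo-Key-condition`). -/
def KeyEq {n : ℕ} (T S Γ : Matrix (Fin n) (Fin n) F) : Prop :=
  ∀ r i k : Fin n, i < k →
    2 * Γ i r * Γ k r + Γ k r ^ 2 * S k i =
      ∑ j ∈ Finset.univ.filter (fun j => j < r),
        T r j * (Γ k j * Γ k r * S k i + Γ k j * Γ i r + Γ i j * Γ k r)

/-! ### Auxiliary infrastructure for the proof of `stmt6`. -/

section Aux

open TrivSqZeroExt DualNumber

set_option synthInstance.maxHeartbeats 1000000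
set_option maxHeartbeats 1000000
set_option maxRecDepth 8000

/-- `ℝ[ε₁, ε₂]` with `ε₁² = ε₂² = 0`. -/
abbrev B2 := DualNumber (DualNumber ℝ)

instance iB2comm : CommRing B2 := inferInstance
instance iB2alg : Algebra ℝ B2 := inferInstance

def XX : B2 := inl ε
def YY : B2 := ε
def ZZ : B2 := inr ε

lemma XX_mul_XX : XX * XX = 0 := by
  rw [XX, inl_mul_inl, eps_mul_eps, inl_zero]
lemma YY_mul_YY : YY * YY = 0 := eps_mul_eps
lemma XX_mul_YY : XX * YY = ZZ := by
  rw [XX, YY, ZZ, show (ε : B2) = inr (1 : DualNumber ℝ) from rfl, inl_mul_inr,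
    smul_eq_mul, mul_one]
lemma YY_mul_XX : YY * XX = ZZ := by rw [mul_comm, XX_mul_YY]

lemma keymul (xk yk xl yl : ℝ) :
    (xk • XX + yk • YY) * (xl • XX + yl • YY) = (xk * yl + xl * yk) • ZZ := by
  rw [add_mul, mul_add, mul_add, smul_mul_smul_comm, smul_mul_smul_comm,
    smul_mul_smul_comm, smul_mul_smul_comm, XX_mul_XX, YY_mul_YY, XX_mul_YY, YY_mul_XX,
    smul_zero, smul_zero, add_smul, mul_comm xl yk]
  abel

lemma zz_snd (r : ℝ) : ((r • ZZ).snd).snd = r := by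
  rw [ZZ, snd_smul, snd_inr, snd_smul, eps, snd_inr, smul_eq_mul, mul_one]

lemma zz_ext {r s : ℝ} (h : r • ZZ = s • ZZ) : r = s := by
  have := congrArg (fun z : B2 => z.snd.snd) h
  simpa only [zz_snd] using this

/-- The defining relations of `A(T)` hold among the generators. -/
lemma NTrel {n : ℕ} (T : Matrix (Fin n) (Fin n) F) (i : Fin n) :
    (NTgen F T i) ^ 2 =
      ∑ j ∈ Finset.univ.filter (fun j => j < i), T i j • (NTgen F T j * NTgen F T i) := by
  have hmem : (X i ^ 2 - ∑ j ∈ Finset.univ.filter (fun j => j < i), C (T i j) * X j * X i)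
      ∈ Ideal.span (relSet F T) := Ideal.subset_span ⟨i, rfl⟩
  have h0 := (Ideal.Quotient.eq_zero_iff_mem).mpr hmem
  rw [map_sub, sub_eq_zero, map_sum] at h0
  calc (NTgen F T i) ^ 2 = Ideal.Quotient.mk _ (X i ^ 2) := by rw [NTgen, map_pow]
  _ = _ := by
      rw [h0]
      refine Finset.sum_congr rfl fun j hj => ?_
      rw [map_mul, map_mul, show (C (T i j) : MvPolynomial (Fin n) F) = algebraMap F _ (T i j)
        from rfl, Ideal.Quotient.mk_algebraMap, ← Algebra.smul_def, smul_mul_assoc]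
      rfl

/-- Evaluation homomorphisms of `A(T)`. -/
def NTlift {n : ℕ} (T : Matrix (Fin n) (Fin n) F) {B : Type} [CommRing B] [Algebra F B]
    (w : Fin n → B)
    (hw : ∀ i : Fin n, (w i) * (w i) =
      ∑ j ∈ Finset.univ.filter (fun j => j < i), T i j • (w j * w i)) :
    NTAlg F T →ₐ[F] B :=
  Ideal.Quotient.liftₐ _ (aeval w) (by
    intro a ha
    have hker : Ideal.span (relSet F T) ≤
        RingHom.ker (aeval w : MvPolynomial (Fin n) F →ₐ[F] B) := by
      rw [Ideal.span_le]
      rintro r ⟨i, rfl⟩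
      simp only [SetLike.mem_coe, RingHom.mem_ker, RingHom.coe_coe, map_sub, map_pow, map_sum,
        map_mul, aeval_X, aeval_C]
      rw [sub_eq_zero, pow_two, hw i]
      exact Finset.sum_congr rfl fun j hj => by rw [Algebra.smul_def, mul_assoc]
    exact RingHom.mem_ker.mp (hker ha))

lemma NTlift_gen {n : ℕ} (T : Matrix (Fin n) (Fin n) F) {B : Type} [CommRing B] [Algebra F B]
    (w : Fin n → B) (hw) (k : Fin n) : NTlift F T w hw (NTgen F T k) = w k := by
  rw [NTgen, NTlift, Ideal.Quotient.liftₐ_apply]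
  exact aeval_X _ k

/-- The generators of `A(T)` are linearly independent. -/
lemma NTindep {n : ℕ} (T : Matrix (Fin n) (Fin n) F) (c c' : Fin n → F)
    (h : ∑ k, c k • NTgen F T k = ∑ k, c' k • NTgen F T k) (l : Fin n) : c l = c' l := by
  classical
  set w : Fin n → DualNumber F := fun k => (if k = l then (1:F) else 0) • ε with hwdef
  have hz : ∀ a b : Fin n, w a * w b = 0 := by
    intro a b
    rw [hwdef]
    simp only [smul_mul_smul_comm, eps_mul_eps, smul_zero]
  have hw : ∀ i : Fin n, (w i) * (w i) =
      ∑ j ∈ Finset.univ.filter (fun j => j < i), T i j • (w j * w i) := by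
    intro i
    simp only [hz, smul_zero, Finset.sum_const_zero]
  have h2 := congrArg (NTlift F T w hw) h
  simp only [map_sum, map_smul, NTlift_gen] at h2
  have h3 := congrArg TrivSqZeroExt.snd h2
  simp only [TrivSqZeroExt.snd_sum, TrivSqZeroExt.snd_smul, hwdef, DualNumber.eps,
    TrivSqZeroExt.snd_inr, smul_eq_mul, mul_ite, mul_one, mul_zero,
    Finset.sum_ite_eq', Finset.mem_univ, if_true] at h3
  exact h3

lemma wsum_mul_wsum {n : ℕ} (x y p q : Fin n → ℝ) :
    (∑ k, p k • (x k • XX + y k • YY)) * (∑ l, q l • (x l • XX + y l • YY)) =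
      (∑ k, ∑ l, p k * q l * (x k * y l + x l * y k)) • ZZ := by
  rw [Finset.sum_mul_sum]
  have hterm : ∀ k l : Fin n, (p k • (x k • XX + y k • YY)) * (q l • (x l • XX + y l • YY)) =
      (p k * q l * (x k * y l + x l * y k)) • ZZ := by
    intro k l
    rw [smul_mul_smul_comm, keymul, smul_smul]
  simp_rw [hterm, ← Finset.sum_smul]

/-- The quadric equations satisfied by the matrix of a graded morphism. -/
lemma NTmain {n : ℕ} (Tm Sm : Matrix (Fin n) (Fin n) ℝ) (e : NTAlg ℝ Tm ≃ₐ[ℝ] NTAlg ℝ Sm)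
    (Γ : Fin n → Fin n → ℝ) (hΓ : ∀ j, e (NTgen ℝ Tm j) = ∑ k, Γ j k • NTgen ℝ Sm k)
    (x y : Fin n → ℝ)
    (hxy : ∀ i : Fin n, 2 * (x i * y i) =
      ∑ j ∈ Finset.univ.filter (fun j => j < i), Sm i j * (x j * y i + x i * y j))
    (i : Fin n) :
    ∑ k, ∑ l, Γ i k * Γ i l * (x k * y l + x l * y k) =
      ∑ j ∈ Finset.univ.filter (fun j => j < i),
        Tm i j * ∑ k, ∑ l, Γ j k * Γ i l * (x k * y l + x l * y k) := by
  set w : Fin n → B2 := fun k => x k • XX + y k • YY with hwdef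
  have hw : ∀ i : Fin n, (w i) * (w i) =
      ∑ j ∈ Finset.univ.filter (fun j => j < i), Sm i j • (w j * w i) := by
    intro i
    rw [hwdef]
    simp only
    rw [keymul]
    have : ∀ j : Fin n, (x j • XX + y j • YY) * (x i • XX + y i • YY) =
        (x j * y i + x i * y j) • ZZ := fun j => keymul _ _ _ _
    simp_rw [this, smul_smul, ← Finset.sum_smul]
    rw [show x i * y i + x i * y i = 2 * (x i * y i) by ring, hxy i]
  have h2 := congrArg e (NTrel ℝ Tm i)
  simp only [map_pow, map_sum, map_smul, map_mul, hΓ] at h2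
  have h3 := congrArg (NTlift ℝ Sm w hw) h2
  simp only [map_pow, map_sum, map_smul, map_mul, NTlift_gen] at h3
  rw [pow_two, hwdef] at h3
  simp only at h3
  rw [wsum_mul_wsum] at h3
  have hr : ∀ j : Fin n, (Tm i j • ((∑ k, Γ j k • w k) * (∑ l, Γ i l • w l))) =
      (Tm i j * ∑ k, ∑ l, Γ j k * Γ i l * (x k * y l + x l * y k)) • ZZ := by
    intro j
    rw [hwdef]
    simp only
    rw [wsum_mul_wsum, smul_smul]
  rw [Finset.sum_congr rfl (fun j _ => hr j), ← Finset.sum_smul] at h3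
  exact zz_ext h3

/-- The matrices of a graded isomorphism and of its inverse are inverse to each other. -/
lemma NTcomp {n : ℕ} (Tm Sm : Matrix (Fin n) (Fin n) ℝ) (e : NTAlg ℝ Tm ≃ₐ[ℝ] NTAlg ℝ Sm)
    (Γ Δ : Fin n → Fin n → ℝ)
    (hΓ : ∀ j, e (NTgen ℝ Tm j) = ∑ k, Γ j k • NTgen ℝ Sm k)
    (hΔ : ∀ j, e.symm (NTgen ℝ Sm j) = ∑ k, Δ j k • NTgen ℝ Tm k)
    (i l : Fin n) : ∑ j, Δ i j * Γ j l = if l = i then 1 else 0 := by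
  classical
  have h1 : e (e.symm (NTgen ℝ Sm i)) = NTgen ℝ Sm i := e.apply_symm_apply _
  rw [hΔ i, map_sum] at h1
  simp_rw [map_smul, hΓ, Finset.smul_sum, smul_smul] at h1
  rw [Finset.sum_comm] at h1
  simp_rw [← Finset.sum_smul] at h1
  have h2 : NTgen ℝ Sm i = ∑ k, (if k = i then (1:ℝ) else 0) • NTgen ℝ Sm k := by
    simp [ite_smul]
  rw [h2] at h1
  exact NTindep ℝ Sm _ _ h1 l

lemma rowzero (a0 a1 a2 a3 : ℝ) (h01 : a0*a1 = 0)
    (h02 : 2*a0*a2 + a2^2 = 0) (h12 : 2*a1*a2 + a2^2 = 0)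
    (h03 : 2*a0*a3 - a3^2 = 0) (h13 : 2*a1*a3 + a3^2 = 0) :
    a2 = 0 ∧ a3 = 0 := by
  rcases mul_eq_zero.mp h01 with h | h
  · subst h
    constructor
    · have : a2^2 = 0 := by linarith
      exact pow_eq_zero_iff (by norm_num) |>.mp this
    · have : a3^2 = 0 := by linarith
      exact pow_eq_zero_iff (by norm_num) |>.mp this
  · subst h
    constructor
    · have : a2^2 = 0 := by linarith
      exact pow_eq_zero_iff (by norm_num) |>.mp this
    · have : a3^2 = 0 := by linarith
      exact pow_eq_zero_iff (by norm_num) |>.mp this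

lemma endgame (a0 a1 a2 a3 b0 b1 b2 b3 c0 c1 c2 c3 d0 d1 d2 d3 : ℝ)
    (D20 D21 D22 D23 D30 D31 D32 D33 : ℝ)
    (hA01 : a0*a1 = 0) (hA02 : 2*a0*a2 + a2^2 = 0) (hA12 : 2*a1*a2 + a2^2 = 0)
    (hA03 : 2*a0*a3 - a3^2 = 0) (hA13 : 2*a1*a3 + a3^2 = 0)
    (hB01 : b0*b1 = 0) (hB02 : 2*b0*b2 + b2^2 = 0) (hB12 : 2*b1*b2 + b2^2 = 0)
    (hB03 : 2*b0*b3 - b3^2 = 0) (hB13 : 2*b1*b3 + b3^2 = 0)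
    (hC01 : 2*c0*c1 = (a0*c1 + a1*c0) + (b0*c1 + b1*c0))
    (hC02 : 2*c0*c2 + c2^2 = (a0*c2 + a2*c0 + a2*c2) + (b0*c2 + b2*c0 + b2*c2))
    (hC12 : 2*c1*c2 + c2^2 = (a1*c2 + a2*c1 + a2*c2) + (b1*c2 + b2*c1 + b2*c2))
    (hC03 : 2*c0*c3 - c3^2 = (a0*c3 + a3*c0 - a3*c3) + (b0*c3 + b3*c0 - b3*c3))
    (hC13 : 2*c1*c3 + c3^2 = (a1*c3 + a3*c1 + a3*c3) + (b1*c3 + b3*c1 + b3*c3))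
    (hC23 : 2*c2*c3 = (a2*c3 + a3*c2) + (b2*c3 + b3*c2))
    (hD01 : 2*d0*d1 = (a0*d1 + a1*d0) + (b0*d1 + b1*d0))
    (hD02 : 2*d0*d2 + d2^2 = (a0*d2 + a2*d0 + a2*d2) + (b0*d2 + b2*d0 + b2*d2))
    (hD12 : 2*d1*d2 + d2^2 = (a1*d2 + a2*d1 + a2*d2) + (b1*d2 + b2*d1 + b2*d2))
    (hD03 : 2*d0*d3 - d3^2 = (a0*d3 + a3*d0 - a3*d3) + (b0*d3 + b3*d0 - b3*d3))
    (hD13 : 2*d1*d3 + d3^2 = (a1*d3 + a3*d1 + a3*d3) + (b1*d3 + b3*d1 + b3*d3))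
    (hD23 : 2*d2*d3 = (a2*d3 + a3*d2) + (b2*d3 + b3*d2))
    (hJ22 : D20*a2 + D21*b2 + D22*c2 + D23*d2 = 1)
    (hJ23 : D20*a3 + D21*b3 + D22*c3 + D23*d3 = 0)
    (hJ32 : D30*a2 + D31*b2 + D32*c2 + D33*d2 = 0)
    (hJ33 : D30*a3 + D31*b3 + D32*c3 + D33*d3 = 1) : False := by
  obtain ⟨ha2, ha3⟩ := rowzero a0 a1 a2 a3 hA01 hA02 hA12 hA03 hA13
  obtain ⟨hb2, hb3⟩ := rowzero b0 b1 b2 b3 hB01 hB02 hB12 hB03 hB13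
  subst ha2 ha3 hb2 hb3
  have key2 : (D22*D33 - D23*D32) * (c2*d3 - c3*d2) = 1 := by
    have h22 : D22*c2 + D23*d2 = 1 := by linear_combination hJ22
    have h23 : D22*c3 + D23*d3 = 0 := by linear_combination hJ23
    have h32 : D32*c2 + D33*d2 = 0 := by linear_combination hJ32
    have h33 : D32*c3 + D33*d3 = 1 := by linear_combination hJ33
    linear_combination (D32*c3 + D33*d3) * h22 + h33 - (D32*c2 + D33*d2) * h23
  have hP2 : c2*d3 - c3*d2 ≠ 0 := right_ne_zero_of_mul_eq_one key2
  have hc23 : c2*c3 = 0 := by linear_combination (1/2) * hC23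
  have hd23 : d2*d3 = 0 := by linear_combination (1/2) * hD23
  rcases mul_eq_zero.mp hc23 with hc | hc <;> rcases mul_eq_zero.mp hd23 with hd | hd
  · exact hP2 (by rw [hc, hd]; ring)
  · subst hc hd
    have hc3 : c3 ≠ 0 := fun h => hP2 (by rw [h]; ring)
    have hd2 : d2 ≠ 0 := fun h => hP2 (by rw [h]; ring)
    have e1 : 2*c0 - c3 = a0 + b0 :=
      mul_left_cancel₀ hc3 (by linear_combination hC03)
    have e2 : 2*c1 + c3 = a1 + b1 :=
      mul_left_cancel₀ hc3 (by linear_combination hC13)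
    have e3 : 2*c0*c1 = (a0+b0)*c1 + (a1+b1)*c0 := by linear_combination hC01
    rw [← e1, ← e2] at e3
    have hcsq : c3^2 = -((a0+b0)*(a1+b1)) := by
      rw [← e1, ← e2]; linear_combination (-2)*e3
    have f1 : 2*d0 + d2 = a0 + b0 :=
      mul_left_cancel₀ hd2 (by linear_combination hD02)
    have f2 : 2*d1 + d2 = a1 + b1 :=
      mul_left_cancel₀ hd2 (by linear_combination hD12)
    have f3 : 2*d0*d1 = (a0+b0)*d1 + (a1+b1)*d0 := by linear_combination hD01
    rw [← f1, ← f2] at f3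
    have hdsq : d2^2 = (a0+b0)*(a1+b1) := by
      rw [← f1, ← f2]; linear_combination 2*f3
    have h5 : 0 < c3^2 := (sq_nonneg c3).lt_of_ne' (pow_ne_zero 2 hc3)
    have h8 : c3^2 + d2^2 = 0 := by linear_combination hcsq + hdsq
    have h9 := sq_nonneg d2
    linarith
  · subst hc hd
    have hc2 : c2 ≠ 0 := fun h => hP2 (by rw [h]; ring)
    have hd3 : d3 ≠ 0 := fun h => hP2 (by rw [h]; ring)
    have e1 : 2*c0 + c2 = a0 + b0 :=
      mul_left_cancel₀ hc2 (by linear_combination hC02)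
    have e2 : 2*c1 + c2 = a1 + b1 :=
      mul_left_cancel₀ hc2 (by linear_combination hC12)
    have e3 : 2*c0*c1 = (a0+b0)*c1 + (a1+b1)*c0 := by linear_combination hC01
    rw [← e1, ← e2] at e3
    have hcsq : c2^2 = (a0+b0)*(a1+b1) := by
      rw [← e1, ← e2]; linear_combination 2*e3
    have f1 : 2*d0 - d3 = a0 + b0 :=
      mul_left_cancel₀ hd3 (by linear_combination hD03)
    have f2 : 2*d1 + d3 = a1 + b1 :=
      mul_left_cancel₀ hd3 (by linear_combination hD13)
    have f3 : 2*d0*d1 = (a0+b0)*d1 + (a1+b1)*d0 := by linear_combination hD01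
    rw [← f1, ← f2] at f3
    have hdsq : d3^2 = -((a0+b0)*(a1+b1)) := by
      rw [← f1, ← f2]; linear_combination (-2)*f3
    have h5 : 0 < c2^2 := (sq_nonneg c2).lt_of_ne' (pow_ne_zero 2 hc2)
    have h8 : c2^2 + d3^2 = 0 := by linear_combination hcsq + hdsq
    have h9 := sq_nonneg d3
    linarith
  · exact hP2 (by rw [hc, hd]; ring)

end Aux


set_option maxHeartbeats 4000000 in
set_option synthInstance.maxHeartbeats 1000000 in
/-- Over `ℝ`, the algebras of `S₁` and `S₋₁` are not isomorphic. -/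
theorem stmt6 :
    ¬ NTIso ℝ
        !![(0:ℝ),0,0,0; 0,0,0,0; 1,1,0,0; 1,1,0,0]
        !![(0:ℝ),0,0,0; 0,0,0,0; 1,1,0,0; -1,1,0,0] := by
  rintro ⟨e, hgr1, hgr2⟩
  choose Γ hΓ using fun j => (Submodule.mem_span_range_iff_exists_fun ℝ).mp (hgr1 j)
  choose Δ hΔ using fun j => (Submodule.mem_span_range_iff_exists_fun ℝ).mp (hgr2 j)
  have hΓ' := fun j => (hΓ j).symm
  have hΔ' := fun j => (hΔ j).symm
  have hxy01 : ∀ i : Fin 4, 2 * ((![(1:ℝ),0,0,0]) i * (![(0:ℝ),1,0,0]) i) =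
      ∑ j ∈ Finset.univ.filter (fun j => j < i),
        (!![(0:ℝ),0,0,0; 0,0,0,0; 1,1,0,0; -1,1,0,0]) i j *
          ((![(1:ℝ),0,0,0]) j * (![(0:ℝ),1,0,0]) i + (![(1:ℝ),0,0,0]) i * (![(0:ℝ),1,0,0]) j) := by
    intro i; fin_cases i <;> simp [Finset.sum_filter, Fin.sum_univ_four]
  have hxy02 : ∀ i : Fin 4, 2 * ((![(2:ℝ),0,1,0]) i * (![(0:ℝ),0,1,0]) i) =
      ∑ j ∈ Finset.univ.filter (fun j => j < i),
        (!![(0:ℝ),0,0,0; 0,0,0,0; 1,1,0,0; -1,1,0,0]) i j *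
          ((![(2:ℝ),0,1,0]) j * (![(0:ℝ),0,1,0]) i + (![(2:ℝ),0,1,0]) i * (![(0:ℝ),0,1,0]) j) := by
    intro i; fin_cases i <;> simp [Finset.sum_filter, Fin.sum_univ_four]
  have hxy12 : ∀ i : Fin 4, 2 * ((![(0:ℝ),2,1,0]) i * (![(0:ℝ),0,1,0]) i) =
      ∑ j ∈ Finset.univ.filter (fun j => j < i),
        (!![(0:ℝ),0,0,0; 0,0,0,0; 1,1,0,0; -1,1,0,0]) i j *
          ((![(0:ℝ),2,1,0]) j * (![(0:ℝ),0,1,0]) i + (![(0:ℝ),2,1,0]) i * (![(0:ℝ),0,1,0]) j) := by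
    intro i; fin_cases i <;> simp [Finset.sum_filter, Fin.sum_univ_four]
  have hxy03 : ∀ i : Fin 4, 2 * ((![(2:ℝ),0,0,-1]) i * (![(0:ℝ),0,0,1]) i) =
      ∑ j ∈ Finset.univ.filter (fun j => j < i),
        (!![(0:ℝ),0,0,0; 0,0,0,0; 1,1,0,0; -1,1,0,0]) i j *
          ((![(2:ℝ),0,0,-1]) j * (![(0:ℝ),0,0,1]) i + (![(2:ℝ),0,0,-1]) i * (![(0:ℝ),0,0,1]) j) := by
    intro i; fin_cases i <;> simp [Finset.sum_filter, Fin.sum_univ_four]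
  have hxy13 : ∀ i : Fin 4, 2 * ((![(0:ℝ),2,0,1]) i * (![(0:ℝ),0,0,1]) i) =
      ∑ j ∈ Finset.univ.filter (fun j => j < i),
        (!![(0:ℝ),0,0,0; 0,0,0,0; 1,1,0,0; -1,1,0,0]) i j *
          ((![(0:ℝ),2,0,1]) j * (![(0:ℝ),0,0,1]) i + (![(0:ℝ),2,0,1]) i * (![(0:ℝ),0,0,1]) j) := by
    intro i; fin_cases i <;> simp [Finset.sum_filter, Fin.sum_univ_four]
  have hxy23 : ∀ i : Fin 4, 2 * ((![(0:ℝ),0,1,0]) i * (![(0:ℝ),0,0,1]) i) =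
      ∑ j ∈ Finset.univ.filter (fun j => j < i),
        (!![(0:ℝ),0,0,0; 0,0,0,0; 1,1,0,0; -1,1,0,0]) i j *
          ((![(0:ℝ),0,1,0]) j * (![(0:ℝ),0,0,1]) i + (![(0:ℝ),0,1,0]) i * (![(0:ℝ),0,0,1]) j) := by
    intro i; fin_cases i <;> simp [Finset.sum_filter, Fin.sum_univ_four]
  have E01a := NTmain _ _ e Γ hΓ' _ _ hxy01 0
  simp [Finset.sum_filter, Fin.sum_univ_four, Matrix.cons_val_two, Matrix.cons_val_three, Matrix.vecHead, Matrix.vecTail] at E01a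
  norm_num at E01a
  have E02a := NTmain _ _ e Γ hΓ' _ _ hxy02 0
  simp [Finset.sum_filter, Fin.sum_univ_four, Matrix.cons_val_two, Matrix.cons_val_three, Matrix.vecHead, Matrix.vecTail] at E02a
  norm_num at E02a
  have E12a := NTmain _ _ e Γ hΓ' _ _ hxy12 0
  simp [Finset.sum_filter, Fin.sum_univ_four, Matrix.cons_val_two, Matrix.cons_val_three, Matrix.vecHead, Matrix.vecTail] at E12a
  norm_num at E12a
  have E03a := NTmain _ _ e Γ hΓ' _ _ hxy03 0
  simp [Finset.sum_filter, Fin.sum_univ_four, Matrix.cons_val_two, Matrix.cons_val_three, Matrix.vecHead, Matrix.vecTail] at E03a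
  norm_num at E03a
  have E13a := NTmain _ _ e Γ hΓ' _ _ hxy13 0
  simp [Finset.sum_filter, Fin.sum_univ_four, Matrix.cons_val_two, Matrix.cons_val_three, Matrix.vecHead, Matrix.vecTail] at E13a
  norm_num at E13a
  have E01b := NTmain _ _ e Γ hΓ' _ _ hxy01 1
  simp [Finset.sum_filter, Fin.sum_univ_four, Matrix.cons_val_two, Matrix.cons_val_three, Matrix.vecHead, Matrix.vecTail] at E01b
  norm_num at E01b
  have E02b := NTmain _ _ e Γ hΓ' _ _ hxy02 1
  simp [Finset.sum_filter, Fin.sum_univ_four, Matrix.cons_val_two, Matrix.cons_val_three, Matrix.vecHead, Matrix.vecTail] at E02b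
  norm_num at E02b
  have E12b := NTmain _ _ e Γ hΓ' _ _ hxy12 1
  simp [Finset.sum_filter, Fin.sum_univ_four, Matrix.cons_val_two, Matrix.cons_val_three, Matrix.vecHead, Matrix.vecTail] at E12b
  norm_num at E12b
  have E03b := NTmain _ _ e Γ hΓ' _ _ hxy03 1
  simp [Finset.sum_filter, Fin.sum_univ_four, Matrix.cons_val_two, Matrix.cons_val_three, Matrix.vecHead, Matrix.vecTail] at E03b
  norm_num at E03b
  have E13b := NTmain _ _ e Γ hΓ' _ _ hxy13 1
  simp [Finset.sum_filter, Fin.sum_univ_four, Matrix.cons_val_two, Matrix.cons_val_three, Matrix.vecHead, Matrix.vecTail] at E13b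
  norm_num at E13b
  have E01c := NTmain _ _ e Γ hΓ' _ _ hxy01 2
  simp [Finset.sum_filter, Fin.sum_univ_four, Matrix.cons_val_two, Matrix.cons_val_three, Matrix.vecHead, Matrix.vecTail] at E01c
  norm_num at E01c
  have E02c := NTmain _ _ e Γ hΓ' _ _ hxy02 2
  simp [Finset.sum_filter, Fin.sum_univ_four, Matrix.cons_val_two, Matrix.cons_val_three, Matrix.vecHead, Matrix.vecTail] at E02c
  norm_num at E02c
  have E12c := NTmain _ _ e Γ hΓ' _ _ hxy12 2
  simp [Finset.sum_filter, Fin.sum_univ_four, Matrix.cons_val_two, Matrix.cons_val_three, Matrix.vecHead, Matrix.vecTail] at E12c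
  norm_num at E12c
  have E03c := NTmain _ _ e Γ hΓ' _ _ hxy03 2
  simp [Finset.sum_filter, Fin.sum_univ_four, Matrix.cons_val_two, Matrix.cons_val_three, Matrix.vecHead, Matrix.vecTail] at E03c
  norm_num at E03c
  have E13c := NTmain _ _ e Γ hΓ' _ _ hxy13 2
  simp [Finset.sum_filter, Fin.sum_univ_four, Matrix.cons_val_two, Matrix.cons_val_three, Matrix.vecHead, Matrix.vecTail] at E13c
  norm_num at E13c
  have E23c := NTmain _ _ e Γ hΓ' _ _ hxy23 2
  simp [Finset.sum_filter, Fin.sum_univ_four, Matrix.cons_val_two, Matrix.cons_val_three, Matrix.vecHead, Matrix.vecTail] at E23c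
  norm_num at E23c
  have E01d := NTmain _ _ e Γ hΓ' _ _ hxy01 3
  simp [Finset.sum_filter, Fin.sum_univ_four, Matrix.cons_val_two, Matrix.cons_val_three, Matrix.vecHead, Matrix.vecTail] at E01d
  norm_num at E01d
  have E02d := NTmain _ _ e Γ hΓ' _ _ hxy02 3
  simp [Finset.sum_filter, Fin.sum_univ_four, Matrix.cons_val_two, Matrix.cons_val_three, Matrix.vecHead, Matrix.vecTail] at E02d
  norm_num at E02d
  have E12d := NTmain _ _ e Γ hΓ' _ _ hxy12 3
  simp [Finset.sum_filter, Fin.sum_univ_four, Matrix.cons_val_two, Matrix.cons_val_three, Matrix.vecHead, Matrix.vecTail] at E12d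
  norm_num at E12d
  have E03d := NTmain _ _ e Γ hΓ' _ _ hxy03 3
  simp [Finset.sum_filter, Fin.sum_univ_four, Matrix.cons_val_two, Matrix.cons_val_three, Matrix.vecHead, Matrix.vecTail] at E03d
  norm_num at E03d
  have E13d := NTmain _ _ e Γ hΓ' _ _ hxy13 3
  simp [Finset.sum_filter, Fin.sum_univ_four, Matrix.cons_val_two, Matrix.cons_val_three, Matrix.vecHead, Matrix.vecTail] at E13d
  norm_num at E13d
  have E23d := NTmain _ _ e Γ hΓ' _ _ hxy23 3
  simp [Finset.sum_filter, Fin.sum_univ_four, Matrix.cons_val_two, Matrix.cons_val_three, Matrix.vecHead, Matrix.vecTail] at E23d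
  norm_num at E23d
  have J22 := NTcomp _ _ e Γ Δ hΓ' hΔ' 2 2
  simp [Fin.sum_univ_four] at J22
  have J23 := NTcomp _ _ e Γ Δ hΓ' hΔ' 2 3
  simp [Fin.sum_univ_four] at J23
  have J32 := NTcomp _ _ e Γ Δ hΓ' hΔ' 3 2
  simp [Fin.sum_univ_four] at J32
  have J33 := NTcomp _ _ e Γ Δ hΓ' hΔ' 3 3
  simp [Fin.sum_univ_four] at J33
  exact endgame (Γ 0 0) (Γ 0 1) (Γ 0 2) (Γ 0 3) (Γ 1 0) (Γ 1 1) (Γ 1 2) (Γ 1 3) (Γ 2 0) (Γ 2 1) (Γ 2 2) (Γ 2 3) (Γ 3 0) (Γ 3 1) (Γ 3 2) (Γ 3 3) (Δ 2 0) (Δ 2 1) (Δ 2 2) (Δ 2 3) (Δ 3 0) (Δ 3 1) (Δ 3 2) (Δ 3 3)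
    (by linear_combination (1/2) * E01a)
    (by linear_combination (1/2) * E02a)
    (by linear_combination (1/2) * E12a)
    (by linear_combination (1/2) * E03a)
    (by linear_combination (1/2) * E13a)
    (by linear_combination (1/2) * E01b)
    (by linear_combination (1/2) * E02b)
    (by linear_combination (1/2) * E12b)
    (by linear_combination (1/2) * E03b)
    (by linear_combination (1/2) * E13b)
    (by linear_combination 1 * E01c)
    (by linear_combination (1/2) * E02c)
    (by linear_combination (1/2) * E12c)
    (by linear_combination (1/2) * E03c)
    (by linear_combination (1/2) * E13c)
    (by linear_combination 1 * E23c)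
    (by linear_combination 1 * E01d)
    (by linear_combination (1/2) * E02d)
    (by linear_combination (1/2) * E12d)
    (by linear_combination (1/2) * E03d)
    (by linear_combination (1/2) * E13d)
    (by linear_combination 1 * E23d)
    (by linear_combination J22)
    (by linear_combination J23)
    (by linear_combination J32)
    (by linear_combination J33)
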